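/- Fix integers K ≥ 2, d ≥ 1, a real λ > 0, set Δt = λ/K², and let S : ℝ → ℝ satisfy |S(s_k)| < 1 for every multi-index k ∈ {1,…,K−1}^d. Let ε > 0 and let ε⁰, ε¹, … ∈ ℝ^({1,…,K−1}^d) be vectors with ‖ε^m‖_∞ ≤ ε for all m. Define for n ≥ 1 the global rounding error vector E^n = Σ_{m=0}^{n−1} Σ_{k ∈ {1,…,K−1}^d} (2/K)^d · S(s_k)^{n−1−m} · ⟨ε^m, v_k⟩ · v_k. Then for every n ≥ 1: (a) ‖E^n‖_∞ ≤ 2^d · ε · Σ_k 1/(1 − |S(s_k)|), and (b) the discrete L² norm satisfies ‖E^n‖_{L²}² = K^{−d}‖E^n‖₂² ≤ 2^d · ε² · Σ_k 1/(1 − |S(s_k)|)². -/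

import Mathlib

open Real


/-- The eigenvalue arguments `s_k = −Δt·λ_k^h` of the stability function, with
`Δt = λ/K²` and multi-index `k` with components `(k j) + 1 ∈ {1,…,K−1}`. -/
noncomputable def sVal (K d : ℕ) (lam : ℝ) (k : Fin d → Fin (K - 1)) : ℝ :=
  -(4 * (lam / (K : ℝ) ^ 2) * (K : ℝ) ^ 2
    * ∑ j, Real.sin (π * (((k j : ℕ) : ℝ) + 1) / (2 * K)) ^ 2)

/-- The discrete sine eigenvector `v_k` of the `d`-dimensional finite-difference
Laplacian: `(v_k)_i = Π_j sin(π i_j k_j / K)`. -/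
noncomputable def vVec (K d : ℕ) (k i : Fin d → Fin (K - 1)) : ℝ :=
  ∏ j, Real.sin (π * (((i j : ℕ) : ℝ) + 1) * (((k j : ℕ) : ℝ) + 1) / K)

lemma sum_cos_mul (θ : ℝ) (K : ℕ) :
    2 * Real.sin (θ/2) * ∑ i ∈ Finset.range K, Real.cos (i*θ)
      = Real.sin (K*θ - θ/2) + Real.sin (θ/2) := by
  have key : ∀ i : ℕ, 2 * Real.sin (θ/2) * Real.cos (i*θ)
      = Real.sin (((i+1 : ℕ):ℝ)*θ - θ/2) - Real.sin ((i:ℝ)*θ - θ/2) := by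
    intro i
    have h := Real.sin_sub_sin ((i:ℝ)*θ + θ/2) ((i:ℝ)*θ - θ/2)
    have e1 : ((i:ℝ)*θ + θ/2 - ((i:ℝ)*θ - θ/2))/2 = θ/2 := by ring
    have e2 : ((i:ℝ)*θ + θ/2 + ((i:ℝ)*θ - θ/2))/2 = (i:ℝ)*θ := by ring
    rw [e1, e2] at h
    push_cast
    rw [show ((i:ℝ)+1)*θ - θ/2 = (i:ℝ)*θ + θ/2 by ring]
    linarith [h]
  calc 2 * Real.sin (θ/2) * ∑ i ∈ Finset.range K, Real.cos (i*θ)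
      = ∑ i ∈ Finset.range K,
          (Real.sin (((i+1:ℕ):ℝ)*θ - θ/2) - Real.sin ((i:ℝ)*θ - θ/2)) := by
        rw [Finset.mul_sum]; exact Finset.sum_congr rfl fun i _ => key i
    _ = Real.sin ((K:ℝ)*θ - θ/2) - Real.sin ((0:ℕ)*θ - θ/2) :=
        Finset.sum_range_sub (fun i : ℕ => Real.sin ((i:ℝ)*θ - θ/2)) K
    _ = Real.sin ((K:ℝ)*θ - θ/2) + Real.sin (θ/2) := by
        simp [Real.sin_neg]

lemma sum_cos_int (K : ℕ) (hK : 0 < K) (m : ℤ)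
    (h : Real.sin (π * m / (2*K)) ≠ 0) :
    ∑ i ∈ Finset.range K, Real.cos (π * i * m / K) = (1 - Real.cos (m * π))/2 := by
  have hK0 : (K:ℝ) ≠ 0 := Nat.cast_ne_zero.mpr hK.ne'
  set θ : ℝ := π * m / K with hθ
  have hhalf : θ/2 = π * m / (2*K) := by rw [hθ]; ring
  have h2 : Real.sin (θ/2) ≠ 0 := by rw [hhalf]; exact h
  have hsum := sum_cos_mul θ K
  have hKθ : (K:ℝ)*θ = m*π := by rw [hθ]; field_simp
  have hrw : ∀ i : ℕ, Real.cos ((i:ℝ)*θ) = Real.cos (π * i * m / K) := by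
    intro i; congr 1; rw [hθ]; ring
  rw [Finset.sum_congr rfl (fun i _ => hrw i), hKθ] at hsum
  have hsin : Real.sin ((m:ℝ)*π - θ/2) = - Real.cos ((m:ℝ)*π) * Real.sin (θ/2) := by
    rw [Real.sin_sub, Real.sin_int_mul_pi]; ring
  rw [hsin] at hsum
  have := mul_left_cancel₀ h2
    (show Real.sin (θ/2) * (2 * (∑ i ∈ Finset.range K, Real.cos (π * i * m / K)))
        = Real.sin (θ/2) * (1 - Real.cos ((m:ℝ)*π)) by linarith [hsum])
  linarith [this]

lemma sin_ne_zero_aux (K : ℕ) (hK : 0 < K) (m : ℤ) (hm : m ≠ 0) (hm2 : m.natAbs < 2*K) :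
    Real.sin (π * m / (2*K)) ≠ 0 := by
  intro h
  rw [Real.sin_eq_zero_iff] at h
  obtain ⟨n, hn⟩ := h
  have hK0 : (K:ℝ) ≠ 0 := Nat.cast_ne_zero.mpr hK.ne'
  have hπ : (π:ℝ) ≠ 0 := Real.pi_ne_zero
  field_simp at hn
  have h2 : ((n:ℝ)*(2*K)) * π = (m:ℝ) * π := by rw [← hn]; ring
  have h3 : ((n:ℝ)*(2*K)) = (m:ℝ) := mul_right_cancel₀ hπ h2
  have he : n*(2*(K:ℤ)) = m := by exact_mod_cast h3
  have hna : m.natAbs = n.natAbs * (2*K) := by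
    rw [← he, Int.natAbs_mul]
    norm_num [Int.natAbs_natCast]
    omega
  rcases Nat.eq_zero_or_pos n.natAbs with h0 | h0
  · rw [h0, zero_mul] at hna
    exact hm (Int.natAbs_eq_zero.mp hna)
  · have : 2*K ≤ m.natAbs := by
      rw [hna]; exact Nat.le_mul_of_pos_left _ h0
    omega

lemma sin_mul_sin' (x y : ℝ) :
    Real.sin x * Real.sin y = (Real.cos (x - y) - Real.cos (x + y))/2 := by
  rw [Real.cos_sub, Real.cos_add]; ring

lemma Dsum (K : ℕ) (hK : 2 ≤ K) (m : ℤ) (hm : m ≠ 0) (hm2 : m.natAbs < 2*K) :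
    ∑ i ∈ Finset.range (K-1), Real.cos (π*((i:ℝ)+1)*(m:ℝ)/K)
      = (1 - Real.cos ((m:ℝ)*π))/2 - 1 := by
  have hK1 : 0 < K := by omega
  have hfull := sum_cos_int K hK1 m (sin_ne_zero_aux K hK1 m hm hm2)
  have h0 : K - 1 + 1 = K := by omega
  have hsplit := Finset.sum_range_succ' (fun i : ℕ => Real.cos (π*(i:ℝ)*(m:ℝ)/K)) (K-1)
  rw [h0] at hsplit
  simp only [Nat.cast_zero] at hsplit
  have hz : Real.cos (π*(0:ℝ)*(m:ℝ)/K) = 1 := by norm_num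
  rw [hz] at hsplit
  have harg : ∀ i : ℕ, Real.cos (π*((i+1:ℕ):ℝ)*(m:ℝ)/K) = Real.cos (π*((i:ℝ)+1)*(m:ℝ)/K) := by
    intro i; push_cast; ring_nf
  rw [Finset.sum_congr rfl (fun i _ => harg i)] at hsplit
  have harg2 : ∀ i : ℕ, Real.cos (π*(i:ℝ)*(m:ℝ)/K) = Real.cos (π*(i:ℕ)*(m:ℝ)/K) := fun i => rfl
  rw [hsplit] at hfull
  linarith [hfull]

lemma orth1 (K : ℕ) (hK : 2 ≤ K) (a b : Fin (K-1)) :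
    ∑ i ∈ Finset.range (K-1),
      Real.sin (π*((i:ℝ)+1)*(((a:ℕ):ℝ)+1)/K) * Real.sin (π*((i:ℝ)+1)*(((b:ℕ):ℝ)+1)/K)
      = if a = b then (K:ℝ)/2 else 0 := by
  have hK1 : 0 < K := by omega
  have ha : (a:ℕ) < K - 1 := a.isLt
  have hb : (b:ℕ) < K - 1 := b.isLt
  have hterm : ∀ i : ℕ,
      Real.sin (π*((i:ℝ)+1)*(((a:ℕ):ℝ)+1)/K) * Real.sin (π*((i:ℝ)+1)*(((b:ℕ):ℝ)+1)/K)
      = (Real.cos (π*((i:ℝ)+1)*((((a:ℤ)-(b:ℤ)):ℤ):ℝ)/K)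
         - Real.cos (π*((i:ℝ)+1)*((((a:ℤ)+(b:ℤ)+2):ℤ):ℝ)/K))/2 := by
    intro i
    rw [sin_mul_sin']
    congr 2
    · push_cast; ring
    · push_cast; ring
  rw [Finset.sum_congr rfl (fun i _ => hterm i)]
  rw [← Finset.sum_div, Finset.sum_sub_distrib]
  by_cases hab : a = b
  · subst hab
    simp only [sub_self]
    have hD0 : ∑ i ∈ Finset.range (K-1), Real.cos (π*((i:ℝ)+1)*(((0:ℤ)):ℝ)/K) = (K:ℝ) - 1 := by
      simp only [Int.cast_zero, mul_zero, zero_div, Real.cos_zero]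
      rw [Finset.sum_const, Finset.card_range, nsmul_eq_mul, mul_one]
      push_cast [Nat.cast_sub (by omega : 1 ≤ K)]
      ring
    have hm2 : ((a:ℤ)+(a:ℤ)+2).natAbs < 2*K := by omega
    have hD2 := Dsum K hK ((a:ℤ)+(a:ℤ)+2) (by omega) hm2
    have hcos : Real.cos (((((a:ℤ)+(a:ℤ)+2):ℤ):ℝ)*π) = 1 := by
      have := Real.cos_add_int_mul_two_pi 0 ((a:ℤ)+1)
      rw [zero_add, Real.cos_zero] at this
      rw [← this]; congr 1; push_cast; ring
    simp only [if_true]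
    rw [hD0, hD2, hcos]
    ring
  · rw [if_neg hab]
    have hne : (a:ℤ) - (b:ℤ) ≠ 0 := by
      intro h
      exact hab (Fin.ext (by omega))
    have hm1 : ((a:ℤ)-(b:ℤ)).natAbs < 2*K := by omega
    have hm2 : ((a:ℤ)+(b:ℤ)+2).natAbs < 2*K := by omega
    have hD1 := Dsum K hK ((a:ℤ)-(b:ℤ)) hne hm1
    have hD2 := Dsum K hK ((a:ℤ)+(b:ℤ)+2) (by omega) hm2
    have hcos : Real.cos (((((a:ℤ)+(b:ℤ)+2):ℤ):ℝ)*π) = Real.cos (((((a:ℤ)-(b:ℤ)):ℤ):ℝ)*π) := by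
      have := Real.cos_add_int_mul_two_pi (((((a:ℤ)-(b:ℤ)):ℤ):ℝ)*π) ((b:ℤ)+1)
      rw [← this]; congr 1; push_cast; ring
    rw [hD1, hD2, hcos]
    ring


lemma orthd (K d : ℕ) (hK : 2 ≤ K) (k l : Fin d → Fin (K-1)) :
    ∑ i : Fin d → Fin (K-1), vVec K d k i * vVec K d l i
      = if k = l then ((K:ℝ)/2)^d else 0 := by
  have h1 : ∀ i : Fin d → Fin (K-1), vVec K d k i * vVec K d l i
      = ∏ j, (Real.sin (π*(((i j:ℕ):ℝ)+1)*(((k j:ℕ):ℝ)+1)/K)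
              * Real.sin (π*(((i j:ℕ):ℝ)+1)*(((l j:ℕ):ℝ)+1)/K)) := by
    intro i; rw [vVec, vVec, ← Finset.prod_mul_distrib]
  rw [Finset.sum_congr rfl fun i _ => h1 i]
  rw [show (Finset.univ : Finset (Fin d → Fin (K-1))) = Fintype.piFinset (fun _ => Finset.univ) from
    (Fintype.piFinset_univ).symm]
  have hps := Finset.prod_univ_sum (fun _ : Fin d => (Finset.univ : Finset (Fin (K-1))))
    (fun j x => Real.sin (π*(((x:ℕ):ℝ)+1)*(((k j:ℕ):ℝ)+1)/K)
      * Real.sin (π*(((x:ℕ):ℝ)+1)*(((l j:ℕ):ℝ)+1)/K))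
  rw [← hps]
  have h2 : ∀ j : Fin d, (∑ x : Fin (K-1),
      Real.sin (π*(((x:ℕ):ℝ)+1)*(((k j:ℕ):ℝ)+1)/K)
        * Real.sin (π*(((x:ℕ):ℝ)+1)*(((l j:ℕ):ℝ)+1)/K))
      = if k j = l j then (K:ℝ)/2 else 0 := by
    intro j
    rw [Fin.sum_univ_eq_sum_range (fun x : ℕ =>
      Real.sin (π*((x:ℝ)+1)*(((k j:ℕ):ℝ)+1)/K) * Real.sin (π*((x:ℝ)+1)*(((l j:ℕ):ℝ)+1)/K)) (K-1)]
    exact orth1 K hK (k j) (l j)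
  rw [Finset.prod_congr rfl fun j _ => h2 j]
  by_cases h : k = l
  · subst h
    simp [Finset.prod_const, div_pow]
  · rw [if_neg h]
    obtain ⟨j, hj⟩ := Function.ne_iff.mp h
    exact Finset.prod_eq_zero (Finset.mem_univ j) (if_neg hj)

lemma sum_bound (n : ℕ) (s B C : ℝ) (hs : |s| < 1) (hB : 0 ≤ B) (hC : 0 ≤ C) (t : ℕ → ℝ)
    (ht : ∀ m, |t m| ≤ C) :
    |∑ m ∈ Finset.range n, B * s^(n-1-m) * t m| ≤ B * C * (1/(1 - |s|)) := by
  have h1 : 0 < 1 - |s| := by have := abs_nonneg s; linarith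
  have hgeo : ∑ j ∈ Finset.range n, |s|^j ≤ 1/(1-|s|) := by
    rw [geom_sum_eq hs.ne n]
    have hne1 : |s| - 1 ≠ 0 := sub_ne_zero.mpr hs.ne
    have hne2 : (1:ℝ) - |s| ≠ 0 := h1.ne'
    have heq : (|s|^n - 1)/(|s| - 1) = (1 - |s|^n)/(1 - |s|) := by
      rw [div_eq_div_iff hne1 hne2]; ring
    rw [heq, div_le_div_iff₀ h1 h1]
    have := pow_nonneg (abs_nonneg s) n
    nlinarith
  calc |∑ m ∈ Finset.range n, B * s^(n-1-m) * t m|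
      ≤ ∑ m ∈ Finset.range n, |B * s^(n-1-m) * t m| := Finset.abs_sum_le_sum_abs _ _
    _ ≤ ∑ m ∈ Finset.range n, B * |s|^(n-1-m) * C := by
        refine Finset.sum_le_sum fun m _ => ?_
        rw [abs_mul, abs_mul, abs_pow, abs_of_nonneg hB]
        exact mul_le_mul_of_nonneg_left (ht m)
          (mul_nonneg hB (pow_nonneg (abs_nonneg s) _))
    _ = B * C * ∑ m ∈ Finset.range n, |s|^(n-1-m) := by
        rw [Finset.mul_sum]; exact Finset.sum_congr rfl fun m _ => by ring
    _ = B * C * ∑ j ∈ Finset.range n, |s|^j := by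
        rw [Finset.sum_range_reflect (fun j => |s|^j) n]
    _ ≤ B * C * (1/(1-|s|)) := mul_le_mul_of_nonneg_left hgeo (mul_nonneg hB hC)

/-- Worst-case bounds for the global rounding error
`E^n = Σ_{m<n} Σ_k (2/K)^d S(s_k)^{n−1−m} ⟨ε^m, v_k⟩ v_k` driven by local
errors bounded entrywise by `ε`:
(a) `‖E^n‖_∞ ≤ 2^d ε Σ_k 1/(1 − |S(s_k)|)`;
(b) `‖E^n‖_{L²}² = K^{−d} ‖E^n‖₂² ≤ 2^d ε² Σ_k 1/(1 − |S(s_k)|)²`. -/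
theorem worst_case_global_error_bounds (K d : ℕ) (hK : 2 ≤ K) (hd : 1 ≤ d)
    (lam : ℝ) (hlam : 0 < lam) (S : ℝ → ℝ)
    (hS : ∀ k : Fin d → Fin (K - 1), |S (sVal K d lam k)| < 1)
    (ε : ℝ) (hε : 0 < ε)
    (eps : ℕ → (Fin d → Fin (K - 1)) → ℝ)
    (heps : ∀ m i, |eps m i| ≤ ε)
    (E : ℕ → (Fin d → Fin (K - 1)) → ℝ)
    (hE : ∀ n i, E n i = ∑ m ∈ Finset.range n, ∑ k : Fin d → Fin (K - 1),
      (2 / (K : ℝ)) ^ d * S (sVal K d lam k) ^ (n - 1 - m)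
        * (∑ i', eps m i' * vVec K d k i') * vVec K d k i)
    (n : ℕ) (hn : 1 ≤ n) :
    (∀ i, |E n i| ≤ 2 ^ d * ε
        * ∑ k : Fin d → Fin (K - 1), 1 / (1 - |S (sVal K d lam k)|)) ∧
    ((K : ℝ) ^ d)⁻¹ * ∑ i, E n i ^ 2
      ≤ 2 ^ d * ε ^ 2
        * ∑ k : Fin d → Fin (K - 1), 1 / (1 - |S (sVal K d lam k)|) ^ 2 := by
  have hK1 : (1:ℕ) ≤ K := by omega
  have hKR : (0:ℝ) < K := by exact_mod_cast (by omega : 0 < K)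
  have hvle : ∀ k i, |vVec K d k i| ≤ 1 := by
    intro k i
    rw [vVec, Finset.abs_prod]
    exact Finset.prod_le_one (fun j _ => abs_nonneg _) (fun j _ => Real.abs_sin_le_one _)
  have hinner : ∀ m k, |∑ i', eps m i' * vVec K d k i'| ≤ ε * ((K:ℝ)-1)^d := by
    intro m k
    calc |∑ i', eps m i' * vVec K d k i'|
        ≤ ∑ i', |eps m i' * vVec K d k i'| := Finset.abs_sum_le_sum_abs _ _
      _ ≤ ∑ _i' : Fin d → Fin (K-1), ε := by
          refine Finset.sum_le_sum fun i' _ => ?_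
          rw [abs_mul]
          calc |eps m i'| * |vVec K d k i'| ≤ ε * 1 :=
                mul_le_mul (heps m i') (hvle k i') (abs_nonneg _) hε.le
            _ = ε := mul_one ε
      _ = ((K-1:ℕ)^d : ℕ) * ε := by
          rw [Finset.sum_const, Finset.card_univ, nsmul_eq_mul]
          congr 2
          simp [Fintype.card_fun]
      _ = ε * ((K:ℝ)-1)^d := by
          push_cast [Nat.cast_sub hK1]
          ring
  set c := fun k : Fin d → Fin (K-1) => S (sVal K d lam k) with hcdef
  have hc1 : ∀ k, 0 < 1 - |c k| := fun k => by
    have := hS k; simp only [hcdef]; linarith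
  have hErep : ∀ i, E n i = ∑ k : Fin d → Fin (K-1),
      (∑ m ∈ Finset.range n, (2/(K:ℝ))^d * c k ^ (n-1-m) * (∑ i', eps m i' * vVec K d k i'))
        * vVec K d k i := by
    intro i
    rw [hE n i, Finset.sum_comm]
    exact Finset.sum_congr rfl fun k _ => (Finset.sum_mul _ _ _).symm
  set g := fun k : Fin d → Fin (K-1) =>
    ∑ m ∈ Finset.range n, (2/(K:ℝ))^d * c k ^ (n-1-m) * (∑ i', eps m i' * vVec K d k i')
    with hgdef
  have hg : ∀ k, |g k| ≤ 2^d * ε * (1/(1 - |c k|)) := by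
    intro k
    have hKm1 : (0:ℝ) ≤ (K:ℝ)-1 := by
      have h1K : (1:ℝ) ≤ (K:ℝ) := by exact_mod_cast hK1
      linarith
    have hbd := sum_bound n (c k) ((2/(K:ℝ))^d) (ε * ((K:ℝ)-1)^d) (hS k) (by positivity)
      (mul_nonneg hε.le (pow_nonneg hKm1 d)) (fun m => ∑ i', eps m i' * vVec K d k i') (fun m => hinner m k)
    refine hbd.trans ?_
    have key : (2/(K:ℝ))^d * (ε * ((K:ℝ)-1)^d) ≤ 2^d * ε := by
      have h1 : (2/(K:ℝ))^d * ((K:ℝ)-1)^d = (2/(K:ℝ) * ((K:ℝ)-1))^d := (mul_pow _ _ _).symm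
      have h2 : 2/(K:ℝ) * ((K:ℝ)-1) ≤ 2 := by
        rw [div_mul_eq_mul_div, div_le_iff₀ hKR]; nlinarith
      have h2' : (0:ℝ) ≤ 2/(K:ℝ) * ((K:ℝ)-1) := by
        have : (1:ℝ) ≤ (K:ℝ) := by exact_mod_cast hK1
        have : (0:ℝ) ≤ (K:ℝ)-1 := by linarith
        positivity
      have h3 : (2/(K:ℝ) * ((K:ℝ)-1))^d ≤ 2^d := pow_le_pow_left₀ h2' h2 d
      calc (2/(K:ℝ))^d * (ε * ((K:ℝ)-1)^d) = (2/(K:ℝ) * ((K:ℝ)-1))^d * ε := by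
            rw [← h1]; ring
        _ ≤ 2^d * ε := mul_le_mul_of_nonneg_right h3 hε.le
    exact mul_le_mul_of_nonneg_right key (one_div_nonneg.mpr (hc1 k).le)
  constructor
  · intro i
    rw [hErep i]
    calc |∑ k, g k * vVec K d k i| ≤ ∑ k, |g k * vVec K d k i| :=
          Finset.abs_sum_le_sum_abs _ _
      _ ≤ ∑ k, 2^d * ε * (1/(1-|c k|)) := by
          refine Finset.sum_le_sum fun k _ => ?_
          rw [abs_mul]
          calc |g k| * |vVec K d k i| ≤ (2^d * ε * (1/(1-|c k|))) * 1 :=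
                mul_le_mul (hg k) (hvle k i) (abs_nonneg _)
                  (mul_nonneg (by positivity) (one_div_nonneg.mpr (hc1 k).le))
            _ = 2^d * ε * (1/(1-|c k|)) := mul_one _
      _ = 2^d * ε * ∑ k, 1/(1-|c k|) := by rw [Finset.mul_sum]
  · have hsq : ∑ i, E n i ^ 2 = ∑ k, g k^2 * ((K:ℝ)/2)^d := by
      calc ∑ i, E n i ^2
          = ∑ i : Fin d → Fin (K-1), (∑ k, g k * vVec K d k i) * (∑ l, g l * vVec K d l i) := by
            refine Finset.sum_congr rfl fun i _ => ?_; rw [sq, hErep i]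
        _ = ∑ i : Fin d → Fin (K-1), ∑ k, ∑ l, (g k * vVec K d k i) * (g l * vVec K d l i) := by
            exact Finset.sum_congr rfl fun i _ => Finset.sum_mul_sum _ _ _ _
        _ = ∑ k, ∑ l, ∑ i : Fin d → Fin (K-1), (g k * vVec K d k i) * (g l * vVec K d l i) := by
            rw [Finset.sum_comm]
            exact Finset.sum_congr rfl fun k _ => Finset.sum_comm
        _ = ∑ k, ∑ l, g k * g l * ∑ i, vVec K d k i * vVec K d l i := by
            refine Finset.sum_congr rfl fun k _ => Finset.sum_congr rfl fun l _ => ?_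
            rw [Finset.mul_sum]
            exact Finset.sum_congr rfl fun i _ => by ring
        _ = ∑ k, g k^2 * ((K:ℝ)/2)^d := by
            refine Finset.sum_congr rfl fun k _ => ?_
            have hl : ∀ l, g k * g l * (∑ i, vVec K d k i * vVec K d l i)
                = if l = k then g k^2 * ((K:ℝ)/2)^d else 0 := by
              intro l
              rw [orthd K d hK k l]
              by_cases h : k = l
              · subst h
                simp only [if_pos rfl, if_true]
                ring
              · rw [if_neg h, if_neg (fun hh => h hh.symm), mul_zero]
            rw [Finset.sum_congr rfl fun l _ => hl l,
              Finset.sum_ite_eq' Finset.univ k (fun _ => g k^2 * ((K:ℝ)/2)^d),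
              if_pos (Finset.mem_univ k)]
    rw [hsq, Finset.mul_sum]
    calc ∑ k, ((K:ℝ)^d)⁻¹ * (g k^2 * ((K:ℝ)/2)^d)
        ≤ ∑ k, 2^d * ε^2 * (1/(1-|c k|))^2 := by
          refine Finset.sum_le_sum fun k _ => ?_
          have hg2 : g k^2 ≤ (2^d * ε * (1/(1-|c k|)))^2 := by
            rw [← sq_abs (g k)]
            exact pow_le_pow_left₀ (abs_nonneg _) (hg k) 2
          have hle : ((K:ℝ)^d)⁻¹ * (g k^2 * ((K:ℝ)/2)^d)
              ≤ ((K:ℝ)^d)⁻¹ * ((2^d*ε*(1/(1-|c k|)))^2 * ((K:ℝ)/2)^d) := by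
            refine mul_le_mul_of_nonneg_left
              (mul_le_mul_of_nonneg_right hg2 (by positivity)) (by positivity)
          refine hle.trans_eq ?_
          have h2 : ((2:ℝ)^d) * (((2:ℝ))⁻¹)^d = 1 := by rw [← mul_pow]; norm_num
          have hKd : ((K:ℝ)/2)^d = (K:ℝ)^d * ((2:ℝ)⁻¹)^d := by rw [div_eq_mul_inv, mul_pow]
          have hK0 : ((K:ℝ))^d ≠ 0 := by positivity
          rw [hKd]
          have hmain : ((K:ℝ)^d)⁻¹ * (((2:ℝ)^d*ε*(1/(1-|c k|)))^2 * ((K:ℝ)^d * ((2:ℝ)⁻¹)^d))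
              = ((2:ℝ)^d * ((2:ℝ)⁻¹)^d) * (((K:ℝ)^d)⁻¹ * (K:ℝ)^d)
                * (2^d * ε^2 * (1/(1-|c k|))^2) := by ring
          rw [hmain, h2, inv_mul_cancel₀ hK0]
          ring
      _ = 2^d * ε^2 * ∑ k, 1/(1-|c k|)^2 := by
          rw [Finset.mul_sum]
          refine Finset.sum_congr rfl fun k _ => ?_
          rw [div_pow, one_pow]
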